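/- Let A = kQ/<Z> be a finite-dimensional monomial algebra with Q finite and connected, and let d_0: k(Q_1 ⊙ B) → k(Q_0 ⊙ B) be given by d_0(a,β) = (t(a), aβ) − (s(a), βa), where pairs whose second component is a zero path are interpreted as 0. Then for every circuit C that is useful ((Q_1 ⊙ B)_C ≠ ∅) but not strong (some cycle of C is a zero path), the restricted map d_{0,C}: k(Q_1 ⊙ B)_C → k(Q_0 ⊙ B)_C is surjective. -/

import Mathlib

/-!  Basic combinatorics of a quiver given by source/target maps `s t : A → V`.
A path of positive length is a list of arrows `[a₁, …, aₙ]` written in order of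
traversal (so the written path `aₙ … a₁` of the paper corresponds to the list
`[a₁, …, aₙ]`).  -/

namespace Monomial

variable {V A : Type*}

/-- `l` is a path: consecutive arrows are composable. -/
def IsPath (s t : A → V) (l : List A) : Prop := l.Chain' fun a b => t a = s b

/-- Source of a (nonempty) path. -/
def srcOf (s : A → V) (l : List A) : Option V := l.head?.map s

/-- Target of a (nonempty) path. -/
def tgtOf (t : A → V) (l : List A) : Option V := l.getLast?.map t

/-- `l` is a nontrivial cycle. -/
def IsCycleList (s t : A → V) (l : List A) : Prop :=
  l ≠ [] ∧ IsPath s t l ∧ tgtOf t l = srcOf s l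

/-- `Z` is a minimal set of path relations of length at least two. -/
def MinimalRels (s t : A → V) (Z : Set (List A)) : Prop :=
  ∀ z ∈ Z, IsPath s t z ∧ 2 ≤ z.length ∧ ∀ w ∈ Z, w <:+: z → w = z

/-- `l` belongs to `B`: it is a path containing no subpath from `Z`
(the basis of the monomial algebra, positive length part). -/
def InB (s t : A → V) (Z : Set (List A)) (l : List A) : Prop :=
  IsPath s t l ∧ ∀ z ∈ Z, ¬ z <:+: l

/-- `(a, β)` is a cyclic pair in `Q₁ ⊙ B` (if `β = []` it stands for the
trivial path at `s a = t a`). -/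
def PairOK (s t : A → V) (Z : Set (List A)) (p : A × List A) : Prop :=
  InB s t Z p.2 ∧ IsCycleList s t (p.2 ++ [p.1])

/-- The set `W` of cycles containing precisely one subpath from `Z`,
located at their end (for a written cycle `γ = ξα`, the list is `α ++ ξ`). -/
def InW (s t : A → V) (Z : Set (List A)) (l : List A) : Prop :=
  IsCycleList s t l ∧
    ∃ ξ ∈ Z, (∃ α, l = α ++ ξ) ∧ ∀ z ∈ Z, ∀ p q, l = p ++ z ++ q → z = ξ ∧ q = []

/-- Two cycles are in the same circuit iff they are related by rotation. -/
def RotEquiv (l₁ l₂ : List A) : Prop := ∃ n, l₁.rotate n = l₂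

end Monomial

namespace Monomial

open Finsupp Classical




variable {V A : Type*} {k : Type*} [Field k]

/-- The basis vector of `k(Q₁ ⊙ B)` given by an arrow of a cycle `l` together
with its complement: for the cycle `l = [a₁, …, aₙ]` and index `j`,
this is the pair `(a_{j+1}, a_{j+1}^{co})`, where `a_{j+1}^{co}` is the
complementary path of the arrow `a_{j+1}` in the cycle; by convention it is `0`
when the complement is not in `B`. -/
noncomputable def bAt (s t : A → V) (Z : Set (List A)) (k : Type*) [Field k]
    (l : List A) (j : ℕ) : (A × List A) →₀ k :=
  match (l.rotate (j + 1)).getLast? with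
  | none => 0
  | Option.some a =>
      if InB s t Z ((l.rotate (j + 1)).dropLast) then
        Finsupp.single (a, (l.rotate (j + 1)).dropLast) 1
      else 0

/-- The canonical element `K_C = Σᵢ (aᵢ, aᵢ^{co})` attached to a cycle `γ`. -/
noncomputable def KElt (s t : A → V) (Z : Set (List A)) (k : Type*) [Field k]
    (γ : List A) : (A × List A) →₀ k :=
  ∑ j ∈ Finset.range γ.length, bAt s t Z k γ j

/-- Value of the differential `d₀` on a basis element `(a, β)`:
`d₀(a,β) = (t a, aβ) − (s a, βa)`, where summands whose second component is a
zero path are interpreted as `0` (the vertex component is determined by the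
cycle, so is omitted). -/
noncomputable def d0b (s t : A → V) (Z : Set (List A)) (k : Type*) [Field k]
    (p : A × List A) : List A →₀ k :=
  (if InB s t Z (p.2 ++ [p.1]) then Finsupp.single (p.2 ++ [p.1]) (1 : k) else 0)
    - (if InB s t Z (p.1 :: p.2) then Finsupp.single (p.1 :: p.2) (1 : k) else 0)

/-- The differential `d₀ : k(Q₁ ⊙ B) → k(Q₀ ⊙ B)`. -/
noncomputable def d0map (s t : A → V) (Z : Set (List A)) {k : Type*} [Field k]
    (f : (A × List A) →₀ k) : List A →₀ k :=
  f.sum fun p c => c • d0b s t Z k p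

/-- Value of the differential `d₁` on a basis element `(α, β) ∈ Z ⊙ B`:
for `α = aₙ … a₁` this is `Σᵢ (aᵢ, a_{i-1} … a₁ β aₙ … a_{i+1})`,
with summands whose second component is a zero path interpreted as `0`. -/
noncomputable def d1b (s t : A → V) (Z : Set (List A)) (k : Type*) [Field k]
    (α β : List A) : (A × List A) →₀ k :=
  ∑ j ∈ Finset.range α.length, bAt s t Z k (β ++ α) (β.length + j)

/-- The differential `d₁ : k(Z ⊙ B) → k(Q₁ ⊙ B)`. -/
noncomputable def d1map (s t : A → V) (Z : Set (List A)) {k : Type*} [Field k]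
    (g : (List A × List A) →₀ k) : (A × List A) →₀ k :=
  g.sum fun q c => c • d1b s t Z k q.1 q.2

/-- `(α, β)` is a cyclic pair in `Z ⊙ B`. -/
def ZPairOK (s t : A → V) (Z : Set (List A)) (q : List A × List A) : Prop :=
  q.1 ∈ Z ∧ InB s t Z q.2 ∧ IsCycleList s t (q.2 ++ q.1)

end Monomial

namespace Monomial

open Classical


variable {V A : Type*} {k : Type*} [Field k]

private lemma rotEquiv_cancel (l : List A) (n : ℕ) : RotEquiv (l.rotate n) l := by
  rcases Nat.eq_zero_or_pos l.length with h | h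
  · exact ⟨0, by simp [List.eq_nil_of_length_eq_zero h]⟩
  · refine ⟨l.length - n % l.length, ?_⟩
    rw [List.rotate_rotate]
    have h1 : n + (l.length - n % l.length) = l.length * (n / l.length + 1) := by
      have h2 := Nat.div_add_mod n l.length
      have h3 : n % l.length < l.length := Nat.mod_lt _ h
      rw [Nat.mul_add, Nat.mul_one]
      omega
    rw [h1, List.rotate_length_mul]

private lemma rotEquiv_trans {l₁ l₂ l₃ : List A} (h : RotEquiv l₁ l₂) (h' : RotEquiv l₂ l₃) :
    RotEquiv l₁ l₃ := by
  obtain ⟨n, rfl⟩ := h; obtain ⟨m, rfl⟩ := h'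
  exact ⟨n + m, (List.rotate_rotate _ _ _).symm⟩

private lemma rotEquiv_symm {l₁ l₂ : List A} (h : RotEquiv l₁ l₂) : RotEquiv l₂ l₁ := by
  obtain ⟨n, rfl⟩ := h; exact rotEquiv_cancel _ _

private lemma rotEquiv_rotate {l γ : List A} (n : ℕ) (h : RotEquiv l γ) :
    RotEquiv (l.rotate n) γ := rotEquiv_trans (rotEquiv_cancel l n) h

private lemma cycle_rotate_one {s t : A → V} {a : A} {r : List A}
    (h : IsCycleList s t (a :: r)) : IsCycleList s t (r ++ [a]) := by
  obtain ⟨-, hch, hts⟩ := h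
  have hch' := List.isChain_cons.mp hch
  refine ⟨by simp, ?_, ?_⟩
  · refine List.isChain_append.mpr ⟨hch'.2, List.isChain_singleton a, ?_⟩
    intro x hx y hy
    simp only [List.head?_cons, Option.mem_def, Option.some.injEq] at hy
    subst hy
    have hx' : (a :: r).getLast? = some x := by
      cases r with
      | nil => simp at hx
      | cons b r' => rw [List.getLast?_cons_cons]; exact hx
    simpa [tgtOf, srcOf, hx'] using hts
  · cases r with
    | nil => simpa [tgtOf, srcOf] using hts
    | cons b r' =>
      have hb := hch'.1 b (by simp)
      have hgl : (b :: (r' ++ [a])).getLast? = some a := by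
        rw [← List.cons_append]; exact List.getLast?_concat
      simpa [tgtOf, srcOf, hgl] using hb

private lemma cycle_rotate {s t : A → V} (n : ℕ) :
    ∀ {l : List A}, IsCycleList s t l → IsCycleList s t (l.rotate n) := by
  induction n with
  | zero => intro l h; simpa using h
  | succ n ih =>
    intro l h
    cases l with
    | nil => exact absurd rfl h.1
    | cons a r =>
      rw [List.rotate_cons_succ]
      exact ih (cycle_rotate_one h)

private lemma inB_of_infix {s t : A → V} {Z : Set (List A)} {l w : List A}
    (h : InB s t Z l) (hw : w <:+: l) : InB s t Z w :=
  ⟨List.IsChain.infix h.1 hw, fun z hz hzi => h.2 z hz (hzi.trans hw)⟩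

private lemma d0map_add (s t : A → V) (Z : Set (List A)) (f g : (A × List A) →₀ k) :
    d0map s t Z (f + g) = d0map s t Z f + d0map s t Z g :=
  Finsupp.sum_add_index' (fun p => zero_smul k _) (fun p b₁ b₂ => add_smul b₁ b₂ _)

private lemma d0map_single (s t : A → V) (Z : Set (List A)) (p : A × List A) (c : k) :
    d0map s t Z (Finsupp.single p c) = c • d0b s t Z k p :=
  Finsupp.sum_single_index (zero_smul k _)

private lemma key (s t : A → V) (Z : Set (List A)) (γ : List A) :
    ∀ (m : ℕ) (c : k) (l : List A), IsCycleList s t l → InB s t Z l → RotEquiv l γ →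
      ¬ InB s t Z (l.rotate m) →
      ∃ f : (A × List A) →₀ k,
        (∀ p ∈ f.support, PairOK s t Z p ∧ RotEquiv (p.2 ++ [p.1]) γ) ∧
          d0map s t Z f = Finsupp.single l c := by
  intro m
  induction m with
  | zero => intro c l _ hB _ hn; exact absurd (by simpa using hB) hn
  | succ m ih =>
    intro c l hcyc hB hrot hn
    obtain ⟨a, r, rfl⟩ := List.exists_cons_of_ne_nil hcyc.1
    have hpair : PairOK s t Z (a, r) :=
      ⟨inB_of_infix hB (List.suffix_cons a r).isInfix, cycle_rotate_one hcyc⟩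
    have hd0b : d0b s t Z k (a, r) =
        (if InB s t Z (r ++ [a]) then Finsupp.single (r ++ [a]) (1 : k) else 0)
          - Finsupp.single (a :: r) 1 := by
      simp [d0b, hB]
    have hrot1 : (a :: r).rotate 1 = r ++ [a] := by
      simpa using List.rotate_cons_succ r a 0
    have hrE : RotEquiv (r ++ [a]) γ := hrot1 ▸ rotEquiv_rotate 1 hrot
    by_cases h1 : InB s t Z (r ++ [a])
    · have hnr : ¬ InB s t Z ((r ++ [a]).rotate m) := by
        rw [← List.rotate_cons_succ]; exact hn
      obtain ⟨f₁, hf₁s, hf₁⟩ := ih c (r ++ [a]) (cycle_rotate_one hcyc) h1 hrE hnr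
      refine ⟨f₁ + Finsupp.single (a, r) (-c), ?_, ?_⟩
      · intro p hp
        rcases Finset.mem_union.mp (Finsupp.support_add hp) with h | h
        · exact hf₁s p h
        · have : p = (a, r) := by simpa using Finsupp.support_single_subset h
          subst this
          exact ⟨hpair, hrE⟩
      · rw [d0map_add, hf₁, d0map_single, hd0b, if_pos h1]
        ext x
        simp only [Finsupp.add_apply, Finsupp.smul_apply, Finsupp.sub_apply,
          Finsupp.single_apply, smul_eq_mul]
        split_ifs <;> ring
    · refine ⟨Finsupp.single (a, r) (-c), ?_, ?_⟩
      · intro p hp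
        have : p = (a, r) := by simpa using Finsupp.support_single_subset hp
        subst this
        exact ⟨hpair, hrE⟩
      · rw [d0map_single, hd0b, if_neg h1]
        ext x
        simp only [Finsupp.smul_apply, Finsupp.sub_apply, Finsupp.zero_apply,
          Finsupp.single_apply, smul_eq_mul]
        split_ifs <;> ring

end Monomial

open Monomial in
/-- if the circuit `C` of the cycle `γ` is useful
(`(Q₁ ⊙ B)_C ≠ ∅`) but not strong (some cycle of `C` is a zero path), then the
restriction `d_{0,C} : k(Q₁ ⊙ B)_C → k(Q₀ ⊙ B)_C` of
`d₀(a,β) = (t a, aβ) − (s a, βa)` is surjective. -/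
theorem d0_restricted_surjective {V A : Type*} {k : Type*} [Field k]
    (s t : A → V) (Z : Set (List A)) (hZ : MinimalRels s t Z)
    (γ : List A) (hγ : IsCycleList s t γ)
    (huseful : ∃ p : A × List A, PairOK s t Z p ∧ RotEquiv (p.2 ++ [p.1]) γ)
    (hnotstrong : ∃ l, RotEquiv l γ ∧ ¬ InB s t Z l) :
    ∀ g : List A →₀ k,
      (∀ l ∈ g.support, IsCycleList s t l ∧ InB s t Z l ∧ RotEquiv l γ) →
      ∃ f : (A × List A) →₀ k,
        (∀ p ∈ f.support, PairOK s t Z p ∧ RotEquiv (p.2 ++ [p.1]) γ) ∧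
          d0map s t Z f = g := by
  classical
  intro g
  induction g using Finsupp.induction with
  | zero => exact fun _ => ⟨0, by simp, Finsupp.sum_zero_index⟩
  | single_add a b f haf hb ih =>
    intro hg
    have hgf : ∀ l ∈ f.support, IsCycleList s t l ∧ InB s t Z l ∧ RotEquiv l γ := by
      intro l hl
      refine hg l ?_
      have hla : l ≠ a := fun h => haf (h ▸ hl)
      rw [Finsupp.mem_support_iff, Finsupp.add_apply, Finsupp.single_apply, if_neg (fun h => hla h.symm), zero_add]
      exact Finsupp.mem_support_iff.mp hl
    have hga : IsCycleList s t a ∧ InB s t Z a ∧ RotEquiv a γ := by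
      refine hg a ?_
      rw [Finsupp.mem_support_iff, Finsupp.add_apply, Finsupp.single_apply, if_pos rfl,
        Finsupp.notMem_support_iff.mp haf, add_zero]
      exact hb
    obtain ⟨l₀, hl₀γ, hl₀B⟩ := hnotstrong
    obtain ⟨m, hm⟩ := rotEquiv_trans hga.2.2 (rotEquiv_symm hl₀γ)
    have hna : ¬ InB s t Z (a.rotate m) := hm ▸ hl₀B
    obtain ⟨f₁, hf₁s, hf₁⟩ := key s t Z γ m b a hga.1 hga.2.1 hga.2.2 hna
    obtain ⟨f₂, hf₂s, hf₂⟩ := ih hgf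
    refine ⟨f₁ + f₂, ?_, by rw [d0map_add, hf₁, hf₂]⟩
    intro p hp
    rcases Finset.mem_union.mp (Finsupp.support_add hp) with h | h
    · exact hf₁s p h
    · exact hf₂s p h
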